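/- arXiv:1706.09207 — 2 statements merged into one kernel-verified Lean document; each statement's English description precedes it below -/
import Mathlib

section
/- Let a = (1,0) ∈ ℤ² and A = T_a. Suppose b₁, b₂ ∈ ℤ² are primitive, neither equal to ±a, and T_{b₂} ∘ T_{b₁} = ε·A^k for some integer k and sign ε ∈ {+1,-1}. Then ε = -1, k = -4, ω(a,b₂) = ±1, and b₁ = ±(b₂ + 2·ω(a,b₂)·a). -/
open Matrix

def omegaForm (u v : Fin 2 → ℤ) : ℤ := u 0 * v 1 - u 1 * v 0

def Tfun (c x : Fin 2 → ℤ) : Fin 2 → ℤ := x + omegaForm c x • c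

def Tmat (c : Fin 2 → ℤ) : Matrix (Fin 2) (Fin 2) ℤ :=
  !![1 - c 0 * c 1, c 0 * c 0; -(c 1 * c 1), 1 + c 0 * c 1]

theorem Tmat_det (c : Fin 2 → ℤ) : (Tmat c).det = 1 := by
  simp [Tmat, Matrix.det_fin_two_of]; ring

def Tsl (c : Fin 2 → ℤ) : Matrix.SpecialLinearGroup (Fin 2) ℤ := ⟨Tmat c, Tmat_det c⟩

lemma core (p q r s k ε : ℤ) (hε : ε = 1 ∨ ε = -1)
    (hco1 : IsCoprime p q) (hco2 : IsCoprime r s)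
    (hne1 : ¬(p = 1 ∧ q = 0)) (hne1' : ¬(p = -1 ∧ q = 0))
    (E00 : (1 - r*s)*(1 - p*q) + -(r*r*(q*q)) = ε)
    (E01 : (1 - r*s)*(p*p) + r*r*(1 + p*q) = ε*k)
    (E10 : -(s*s*(1 - p*q)) + -((1 + r*s)*(q*q)) = 0)
    (E11 : -(s*s*(p*p)) + (1 + r*s)*(1 + p*q) = ε) :
    ε = -1 ∧ k = -4 ∧ (s = 1 ∨ s = -1) ∧
      ((p = r + 2*s ∧ q = s) ∨ (p = -(r + 2*s) ∧ q = -s)) := by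
  have hd : (r*q - s*p)^2 = 2 - 2*ε := by linear_combination -E00 - E11
  rcases hε with hε | hε
  · -- ε = 1 : contradiction
    subst hε
    have hd0 : r*q - s*p = 0 := by
      have : (r*q - s*p)^2 = 0 := by linarith
      exact pow_eq_zero_iff (by norm_num) |>.mp this
    have h0 : s*s + q*q = 0 := by linear_combination -E10 - q*s*hd0
    have hq : q = 0 := by nlinarith [mul_self_nonneg q, mul_self_nonneg s]
    have hpu : IsUnit p := isCoprime_zero_right.mp (hq ▸ hco1)
    rcases Int.isUnit_iff.mp hpu with h | h
    · exact absurd ⟨h, hq⟩ hne1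
    · exact absurd ⟨h, hq⟩ hne1'
  · subst hε
    have hfac : (r*q - s*p - 2) * (r*q - s*p + 2) = 0 := by linear_combination hd
    have hs0 : s ≠ 0 := by
      intro h
      subst h
      rcases mul_eq_zero.mp hfac with h | h
      · have hq : r * q = 2 := by linarith
        nlinarith [E10]
      · have hq : r * q = -2 := by linarith
        nlinarith [E10]
    rcases mul_eq_zero.mp hfac with hc | hc
    · -- d = 2
      have hd2 : r*q - s*p = 2 := by linarith
      have hqs : (q + s)^2 = 0 := by linear_combination -E10 - q*s*hd2
      have hq : q = -s := by
        have := pow_eq_zero_iff (n := 2) (by norm_num) |>.mp hqs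
        linarith
      subst hq
      have hsum : s * (r + p) = -2 := by linear_combination -hd2
      have hdvd : s ∣ 2 := ⟨-(r+p), by linarith⟩
      have hb1 : s ≤ 2 := Int.le_of_dvd (by norm_num) hdvd
      have hb2 : -2 ≤ s := by
        have := Int.le_of_dvd (by norm_num) ((neg_dvd).mpr hdvd)
        linarith
      have hp2 : s = 2 ∨ s = -2 → False := by
        rintro (h | h) <;> subst h
        · have hpo : ¬ (2:ℤ) ∣ p := fun hh => by
            have := Int.isUnit_iff.mp (hco1.isUnit_of_dvd' hh ⟨-1, by norm_num⟩)
            omega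
          have hro : ¬ (2:ℤ) ∣ r := fun hh => by
            have := Int.isUnit_iff.mp (hco2.isUnit_of_dvd' hh ⟨1, by norm_num⟩)
            omega
          omega
        · have hpo : ¬ (2:ℤ) ∣ p := fun hh => by
            have := Int.isUnit_iff.mp (hco1.isUnit_of_dvd' hh ⟨1, by norm_num⟩)
            omega
          have hro : ¬ (2:ℤ) ∣ r := fun hh => by
            have := Int.isUnit_iff.mp (hco2.isUnit_of_dvd' hh ⟨-1, by norm_num⟩)
            omega
          omega
      interval_cases s
      · exact absurd (Or.inr rfl) hp2
      · -- s = -1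
        have hp : p = 2 - r := by linarith
        subst hp
        refine ⟨rfl, by linear_combination E01, Or.inr rfl, Or.inr ⟨by ring, by ring⟩⟩
      · omega
      · -- s = 1
        have hp : p = -2 - r := by linarith
        subst hp
        refine ⟨rfl, by linear_combination E01, Or.inl rfl, Or.inr ⟨by ring, by ring⟩⟩
      · exact absurd (Or.inl rfl) hp2
    · -- d = -2
      have hd2 : r*q - s*p = -2 := by linarith
      have hqs : (q - s)^2 = 0 := by linear_combination -E10 - q*s*hd2
      have hq : q = s := by
        have := pow_eq_zero_iff (n := 2) (by norm_num) |>.mp hqs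
        linarith
      have hsum : s * (r - p) = -2 := by linear_combination hd2 - r*hq
      have hdvd : s ∣ 2 := ⟨-(r-p), by linarith⟩
      have hb1 : s ≤ 2 := Int.le_of_dvd (by norm_num) hdvd
      have hb2 : -2 ≤ s := by
        have := Int.le_of_dvd (by norm_num) ((neg_dvd).mpr hdvd)
        linarith
      have hp2 : s = 2 ∨ s = -2 → False := by
        rintro (h | h) <;> subst h <;> subst hq
        · have hpo : ¬ (2:ℤ) ∣ p := fun hh => by
            have := Int.isUnit_iff.mp (hco1.isUnit_of_dvd' hh ⟨1, by norm_num⟩)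
            omega
          have hro : ¬ (2:ℤ) ∣ r := fun hh => by
            have := Int.isUnit_iff.mp (hco2.isUnit_of_dvd' hh ⟨1, by norm_num⟩)
            omega
          omega
        · have hpo : ¬ (2:ℤ) ∣ p := fun hh => by
            have := Int.isUnit_iff.mp (hco1.isUnit_of_dvd' hh ⟨-1, by norm_num⟩)
            omega
          have hro : ¬ (2:ℤ) ∣ r := fun hh => by
            have := Int.isUnit_iff.mp (hco2.isUnit_of_dvd' hh ⟨-1, by norm_num⟩)
            omega
          omega
      interval_cases s
      · exact absurd (Or.inr rfl) hp2
      · -- s = -1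
        subst hq
        have hp : p = r - 2 := by linarith
        subst hp
        refine ⟨rfl, by linear_combination E01, Or.inr rfl, Or.inl ⟨by ring, rfl⟩⟩
      · omega
      · -- s = 1
        subst hq
        have hp : p = r + 2 := by linarith
        subst hp
        refine ⟨rfl, by linear_combination E01, Or.inl rfl, Or.inl ⟨by ring, rfl⟩⟩
      · exact absurd (Or.inl rfl) hp2

lemma Amat_pow (k : ℤ) : ((Tsl ![1,0] ^ k : Matrix.SpecialLinearGroup (Fin 2) ℤ) :
    Matrix (Fin 2) (Fin 2) ℤ) = !![1, k; 0, 1] := by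
  have hinv : (((Tsl ![1,0])⁻¹ : Matrix.SpecialLinearGroup (Fin 2) ℤ) :
      Matrix (Fin 2) (Fin 2) ℤ) = !![1, -1; 0, 1] := by
    rw [Matrix.SpecialLinearGroup.SL2_inv_expl]
    ext i j; fin_cases i <;> fin_cases j <;> simp [Tsl, Tmat]
  induction k using Int.induction_on with
  | zero => simp [Matrix.one_fin_two]
  | succ n ih =>
      rw [_root_.zpow_add_one, Matrix.SpecialLinearGroup.coe_mul, ih]
      show _ * Tmat ![1,0] = _
      simp [Tmat, Matrix.mul_fin_two]; ring_nf
  | pred n ih =>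
      rw [_root_.zpow_sub_one, Matrix.SpecialLinearGroup.coe_mul, ih, hinv]
      simp [Matrix.mul_fin_two]; ring_nf

theorem stmt16 (b₁ b₂ : Fin 2 → ℤ)
    (h1 : IsCoprime (b₁ 0) (b₁ 1)) (h2 : IsCoprime (b₂ 0) (b₂ 1))
    (h1a : b₁ ≠ ![1, 0]) (h1a' : b₁ ≠ -![1, 0])
    (h2a : b₂ ≠ ![1, 0]) (h2a' : b₂ ≠ -![1, 0])
    (k : ℤ) (ε : ℤ) (hε : ε = 1 ∨ ε = -1)
    (hprod : ((Tsl b₂ * Tsl b₁ : Matrix.SpecialLinearGroup (Fin 2) ℤ) :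
        Matrix (Fin 2) (Fin 2) ℤ) =
      ε • (((Tsl ![1, 0] ^ k : Matrix.SpecialLinearGroup (Fin 2) ℤ) :
        Matrix (Fin 2) (Fin 2) ℤ))) :
    ε = -1 ∧ k = -4 ∧
    (omegaForm ![1, 0] b₂ = 1 ∨ omegaForm ![1, 0] b₂ = -1) ∧
    (b₁ = b₂ + (2 * omegaForm ![1, 0] b₂) • (![1, 0] : Fin 2 → ℤ) ∨
     b₁ = -(b₂ + (2 * omegaForm ![1, 0] b₂) • (![1, 0] : Fin 2 → ℤ))) := by
  rw [Amat_pow, Matrix.SpecialLinearGroup.coe_mul] at hprod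
  have hprod' : Tmat b₂ * Tmat b₁ = ε • (!![1, k; 0, 1] : Matrix (Fin 2) (Fin 2) ℤ) := hprod
  have h := Matrix.ext_iff.mpr hprod'
  have e00 := h 0 0
  have e01 := h 0 1
  have e10 := h 1 0
  have e11 := h 1 1
  simp [Tmat, Matrix.mul_apply, Fin.sum_univ_two, Matrix.smul_apply] at e00 e01 e10 e11
  have hne1 : ¬(b₁ 0 = 1 ∧ b₁ 1 = 0) := by
    rintro ⟨hp, hq⟩
    exact h1a (by funext i; fin_cases i <;> simp [hp, hq])
  have hne1' : ¬(b₁ 0 = -1 ∧ b₁ 1 = 0) := by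
    rintro ⟨hp, hq⟩
    exact h1a' (by funext i; fin_cases i <;> simp [hp, hq])
  obtain ⟨hε', hk, hs, hpq⟩ :=
    core (b₁ 0) (b₁ 1) (b₂ 0) (b₂ 1) k ε hε h1 h2 hne1 hne1'
      (by linear_combination e00) (by linear_combination e01)
      (by linear_combination e10) (by linear_combination e11)
  have homega : omegaForm ![1, 0] b₂ = b₂ 1 := by simp [omegaForm]
  rw [homega]
  refine ⟨hε', hk, hs, ?_⟩
  rcases hpq with ⟨hp, hq⟩ | ⟨hp, hq⟩
  · left
    funext i; fin_cases i <;>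
      simp [Pi.add_apply, Pi.smul_apply, Matrix.vecHead, Matrix.vecTail, hp, hq] <;> ring
  · right
    funext i; fin_cases i <;>
      simp [Pi.add_apply, Pi.smul_apply, Matrix.vecHead, Matrix.vecTail, hp, hq] <;> ring
end

section
/- Let a = (1,0), b = (0,1) ∈ ℤ², A = T_a, B = T_b. For any integer n and vectors b₄,...,b_ℓ ∈ ℤ², if M denotes the product T_{b_ℓ}⋯T_{b₄} ∘ T_{b+na} ∘ T_b ∘ T_{b+2a}, and M' denotes T_{A⁴(b_ℓ)}⋯T_{A⁴(b₄)} ∘ T_{b+(n+4)a} ∘ T_b ∘ T_{b+2a}, then M' = A⁴ · M · A^{-4}; in particular, M = ε·A^k if and only if M' = ε·A^k. -/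
open Matrix

theorem Tsl_conj (g : Matrix.SpecialLinearGroup (Fin 2) ℤ) (c : Fin 2 → ℤ) :
    Tsl ((g : Matrix (Fin 2) (Fin 2) ℤ).mulVec c) = g * Tsl c * g⁻¹ := by
  have hdet : (g : Matrix (Fin 2) (Fin 2) ℤ) 0 0 * g 1 1 - g 0 1 * g 1 0 = 1 := by
    have := g.2; rwa [Matrix.det_fin_two] at this
  apply Subtype.ext
  rw [Matrix.SpecialLinearGroup.coe_mul, Matrix.SpecialLinearGroup.coe_mul]
  ext i j
  fin_cases i <;> fin_cases j <;>
    simp [Tsl, Tmat, Matrix.SpecialLinearGroup.coe_inv, Matrix.adjugate_fin_two,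
      Matrix.mulVec, Matrix.mul_apply, Fin.sum_univ_two, dotProduct] <;>
    (first | ring1 | linear_combination -hdet)

theorem Tsl_list_conj (g : Matrix.SpecialLinearGroup (Fin 2) ℤ) (m : ℕ)
    (b : Fin m → Fin 2 → ℤ) :
    (List.ofFn fun i : Fin m =>
        Tsl ((g : Matrix (Fin 2) (Fin 2) ℤ).mulVec (b i))).reverse.prod =
      g * (List.ofFn fun i : Fin m => Tsl (b i)).reverse.prod * g⁻¹ := by
  have h1 : (List.ofFn fun i : Fin m =>
      Tsl ((g : Matrix (Fin 2) (Fin 2) ℤ).mulVec (b i))) =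
      ((List.ofFn fun i : Fin m => Tsl (b i)).map fun x => g * x * g⁻¹) := by
    rw [List.map_ofFn]
    congr 1
    funext i
    exact Tsl_conj g (b i)
  rw [h1, ← List.map_reverse]
  induction ((List.ofFn fun i : Fin m => Tsl (b i)).reverse) with
  | nil => simp
  | cons x xs ih => rw [List.map_cons, List.prod_cons, List.prod_cons, ih]; group

theorem stmt17 (n : ℤ) (m : ℕ) (b : Fin m → Fin 2 → ℤ) :
    let a : Fin 2 → ℤ := ![1, 0]
    let bb : Fin 2 → ℤ := ![0, 1]
    let A := Tsl a
    let M := (List.ofFn fun i : Fin m => Tsl (b i)).reverse.prod *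
      (Tsl (bb + n • a) * Tsl bb * Tsl (bb + (2 : ℤ) • a))
    let M' := (List.ofFn fun i : Fin m =>
        Tsl (((A ^ 4 : Matrix.SpecialLinearGroup (Fin 2) ℤ) :
          Matrix (Fin 2) (Fin 2) ℤ).mulVec (b i))).reverse.prod *
      (Tsl (bb + (n + 4) • a) * Tsl bb * Tsl (bb + (2 : ℤ) • a))
    M' = A ^ 4 * M * A ^ (-4 : ℤ) ∧
    ∀ (ε k : ℤ),
      ((M : Matrix (Fin 2) (Fin 2) ℤ) =
          ε • ((A ^ k : Matrix.SpecialLinearGroup (Fin 2) ℤ) :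
            Matrix (Fin 2) (Fin 2) ℤ) ↔
        (M' : Matrix (Fin 2) (Fin 2) ℤ) =
          ε • ((A ^ k : Matrix.SpecialLinearGroup (Fin 2) ℤ) :
            Matrix (Fin 2) (Fin 2) ℤ)) := by
  intro a bb A M M'
  -- basic computations
  have hAcoe : (A : Matrix (Fin 2) (Fin 2) ℤ) = !![1, 1; 0, 1] := by
    show Tmat a = _
    ext i j
    fin_cases i <;> fin_cases j <;> simp [Tmat, a]
  have hA4coe : ((A ^ 4 : Matrix.SpecialLinearGroup (Fin 2) ℤ) :
      Matrix (Fin 2) (Fin 2) ℤ) = !![1, 4; 0, 1] := by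
    rw [Matrix.SpecialLinearGroup.coe_pow, hAcoe]
    norm_num [pow_succ, Matrix.mul_fin_two]
  have hzpow : A ^ (-4 : ℤ) = (A ^ 4)⁻¹ := by group
  have hv : ((A ^ 4 : Matrix.SpecialLinearGroup (Fin 2) ℤ) :
      Matrix (Fin 2) (Fin 2) ℤ).mulVec (bb + n • a) = bb + (n + 4) • a := by
    funext i
    fin_cases i <;>
      simp [hA4coe, Matrix.mulVec, dotProduct, Fin.sum_univ_two, a, bb]
  have hT : Tsl (bb + (n + 4) • a) = A ^ 4 * Tsl (bb + n • a) * (A ^ 4)⁻¹ := by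
    rw [← hv, Tsl_conj]
  -- commuting of A^4 with Tsl bb * Tsl (bb + 2a)
  have hw : A ^ 4 * (Tsl bb * Tsl (bb + (2 : ℤ) • a)) =
      (Tsl bb * Tsl (bb + (2 : ℤ) • a)) * A ^ 4 := by
    apply Subtype.ext
    push_cast [Matrix.SpecialLinearGroup.coe_mul]
    rw [hA4coe]
    show _ * (Tmat bb * Tmat (bb + (2 : ℤ) • a)) = Tmat bb * Tmat (bb + (2 : ℤ) • a) * _
    ext i j
    fin_cases i <;> fin_cases j <;>
      simp [Tmat, Matrix.mul_apply, Fin.sum_univ_two, a, bb]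
  have hlist : (List.ofFn fun i : Fin m =>
      Tsl (((A ^ 4 : Matrix.SpecialLinearGroup (Fin 2) ℤ) :
        Matrix (Fin 2) (Fin 2) ℤ).mulVec (b i))).reverse.prod =
      A ^ 4 * (List.ofFn fun i : Fin m => Tsl (b i)).reverse.prod * (A ^ 4)⁻¹ :=
    Tsl_list_conj (A ^ 4) m b
  have hM' : M' = A ^ 4 * M * (A ^ 4)⁻¹ := by
    show (List.ofFn fun i : Fin m =>
        Tsl (((A ^ 4 : Matrix.SpecialLinearGroup (Fin 2) ℤ) :
          Matrix (Fin 2) (Fin 2) ℤ).mulVec (b i))).reverse.prod *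
      (Tsl (bb + (n + 4) • a) * Tsl bb * Tsl (bb + (2 : ℤ) • a)) = _
    rw [hlist, hT]
    show _ = A ^ 4 * ((List.ofFn fun i : Fin m => Tsl (b i)).reverse.prod *
      (Tsl (bb + n • a) * Tsl bb * Tsl (bb + (2 : ℤ) • a))) * (A ^ 4)⁻¹
    have hw' : (A ^ 4)⁻¹ * (Tsl bb * Tsl (bb + (2 : ℤ) • a)) =
        (Tsl bb * Tsl (bb + (2 : ℤ) • a)) * (A ^ 4)⁻¹ :=
      (Commute.inv_left (hw : Commute _ _)).eq
    simp only [mul_assoc, inv_mul_cancel_left]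
    rw [← mul_assoc (Tsl bb), hw']
  refine ⟨by rw [hM', hzpow], fun ε k => ?_⟩
  have hc : A ^ 4 * A ^ k * (A ^ 4)⁻¹ = A ^ k := by group
  have hc' : (A ^ 4)⁻¹ * A ^ k * A ^ 4 = A ^ k := by group
  have hMM : M = (A ^ 4)⁻¹ * M' * A ^ 4 := by rw [hM']; group
  constructor
  · intro h
    calc (M' : Matrix (Fin 2) (Fin 2) ℤ)
        = ((A ^ 4 : Matrix.SpecialLinearGroup (Fin 2) ℤ) : Matrix (Fin 2) (Fin 2) ℤ) *
            (M : Matrix (Fin 2) (Fin 2) ℤ) *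
            (((A ^ 4 : Matrix.SpecialLinearGroup (Fin 2) ℤ)⁻¹ :
              Matrix.SpecialLinearGroup (Fin 2) ℤ) : Matrix (Fin 2) (Fin 2) ℤ) := by
          rw [hM']; push_cast [Matrix.SpecialLinearGroup.coe_mul]; ring_nf
      _ = ε • (((A ^ 4 * A ^ k * (A ^ 4)⁻¹ : Matrix.SpecialLinearGroup (Fin 2) ℤ)) :
            Matrix (Fin 2) (Fin 2) ℤ) := by
          rw [h]; push_cast [Matrix.SpecialLinearGroup.coe_mul]
          rw [mul_smul_comm, smul_mul_assoc]
      _ = ε • ((A ^ k : Matrix.SpecialLinearGroup (Fin 2) ℤ) :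
            Matrix (Fin 2) (Fin 2) ℤ) := by rw [hc]
  · intro h
    calc (M : Matrix (Fin 2) (Fin 2) ℤ)
        = (((A ^ 4 : Matrix.SpecialLinearGroup (Fin 2) ℤ)⁻¹ :
              Matrix.SpecialLinearGroup (Fin 2) ℤ) : Matrix (Fin 2) (Fin 2) ℤ) *
            (M' : Matrix (Fin 2) (Fin 2) ℤ) *
            ((A ^ 4 : Matrix.SpecialLinearGroup (Fin 2) ℤ) : Matrix (Fin 2) (Fin 2) ℤ) := by
          rw [hMM]; push_cast [Matrix.SpecialLinearGroup.coe_mul]; ring_nf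
      _ = ε • (((A ^ 4)⁻¹ * A ^ k * A ^ 4 : Matrix.SpecialLinearGroup (Fin 2) ℤ) :
            Matrix (Fin 2) (Fin 2) ℤ) := by
          rw [h]; push_cast [Matrix.SpecialLinearGroup.coe_mul]
          rw [mul_smul_comm, smul_mul_assoc]
      _ = ε • ((A ^ k : Matrix.SpecialLinearGroup (Fin 2) ℤ) :
            Matrix (Fin 2) (Fin 2) ℤ) := by rw [hc']
end
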